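/- arXiv:1702.01399 — 2 statements merged into one kernel-verified Lean document; each statement's English description precedes it below -/
import Mathlib

section
/- Let S = diag(0, [[0, ω],[-ω, 0]]) ∈ ℝ^{3×3} with ω ≠ 0, and D = [1, 1, 0] ∈ ℝ^{1×3}. Then the pair (S, D) is observable, i.e., for every λ ∈ ℂ the matrix obtained by stacking S - λI on top of D has rank 3. -/
theorem stmt8 (ω : ℝ) (hω : ω ≠ 0) :
    ∀ lam : ℂ,
      (Matrix.fromRows
        (!![0, 0, 0; 0, 0, (ω : ℂ); 0, -(ω : ℂ), 0] - lam • (1 : Matrix (Fin 3) (Fin 3) ℂ))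
        (!![1, 1, 0])).rank = 3 := by
  intro lam
  set M := Matrix.fromRows
      (!![0, 0, 0; 0, 0, (ω : ℂ); 0, -(ω : ℂ), 0] - lam • (1 : Matrix (Fin 3) (Fin 3) ℂ))
      (!![1, 1, 0]) with hM
  have hinj : Function.Injective M.mulVecLin := by
    rw [← LinearMap.ker_eq_bot, LinearMap.ker_eq_bot']
    intro v hv
    have h0 := congrFun hv (Sum.inl 0)
    have h1 := congrFun hv (Sum.inl 1)
    have h2 := congrFun hv (Sum.inl 2)
    have h3 := congrFun hv (Sum.inr 0)
    simp [hM, Matrix.mulVecLin, Matrix.mulVec, dotProduct,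
      Fin.sum_univ_three, Matrix.one_apply, Fin.val_eq_zero] at h0 h1 h2 h3
    -- h0 : -(lam * v 0) = 0 (roughly); h3 : v 0 + v 1 = 0
    have hωC : (ω : ℂ) ≠ 0 := Complex.ofReal_ne_zero.mpr hω
    by_cases hc : lam ^ 2 + (ω : ℂ) ^ 2 = 0
    · have hlam : lam ≠ 0 := by
        intro h; rw [h] at hc; simp [pow_eq_zero_iff] at hc; exact hω hc
      have hv0 : v 0 = 0 := by
        rcases h0 with h | h
        · exact absurd h hlam
        · exact h
      have hv1 : v 1 = 0 := by linear_combination h3 - hv0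
      have hv2 : v 2 = 0 := by
        have : (ω : ℂ) * v 2 = 0 := by linear_combination h1 + lam * hv1
        exact (mul_eq_zero.mp this).resolve_left hωC
      funext i; fin_cases i <;> assumption
    · have hv1 : v 1 = 0 := by
        have : (lam ^ 2 + (ω : ℂ) ^ 2) * v 1 = 0 := by
          linear_combination (-lam) * h1 - (ω : ℂ) * h2
        rcases mul_eq_zero.mp this with h | h
        · exact absurd h hc
        · exact h
      have hv2 : v 2 = 0 := by
        have : (lam ^ 2 + (ω : ℂ) ^ 2) * v 2 = 0 := by
          linear_combination (ω : ℂ) * h1 - lam * h2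
        rcases mul_eq_zero.mp this with h | h
        · exact absurd h hc
        · exact h
      have hv0 : v 0 = 0 := by linear_combination h3 - hv1
      funext i; fin_cases i <;> assumption
  have : M.rank = Module.finrank ℂ (LinearMap.range M.mulVecLin) := rfl
  rw [this, LinearMap.finrank_range_of_inj hinj]
  simp
end

section
/- Let S ∈ ℝ^{(2k+1)×(2k+1)} be block diagonal with first block the 1×1 zero matrix and subsequent 2×2 blocks [[0, ω_j],[-ω_j, 0]] for distinct nonzero frequencies ω_1,…,ω_k, and let D = [1, 1, 0, 1, 0, …, 1, 0] ∈ ℝ^{1×(2k+1)}. Then for every λ ∈ ℂ, rank of the matrix [S^T - λI, D^T] (as columns) equals 2k+1; hence (S, D) is observable. -/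
private lemma sum_even_pick (k : ℕ) (h : ℕ → ℂ) (hodd : ∀ m, m % 2 = 1 → h m = 0) :
    ∑ m ∈ Finset.range (2*k), h m = ∑ j ∈ Finset.range k, h (2*j) := by
  induction k with
  | zero => simp
  | succ k ih =>
      have : 2*(k+1) = (2*k + 1) + 1 := by ring
      rw [this, Finset.sum_range_succ, Finset.sum_range_succ, Finset.sum_range_succ, ih,
        hodd (2*k+1) (by omega)]
      ring

theorem stmt9 (k : ℕ) (ω : ℕ → ℝ) (hpos : ∀ j < k, 0 < ω j)
    (hdist : ∀ i j, i < k → j < k → i ≠ j → ω i ≠ ω j)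
    (S : Matrix (Fin (2*k+1)) (Fin (2*k+1)) ℝ)
    (hS : ∀ i j : Fin (2*k+1), S i j =
      if i.val % 2 = 1 ∧ j.val = i.val + 1 then ω ((i.val - 1) / 2)
      else if i.val % 2 = 0 ∧ i.val ≠ 0 ∧ j.val + 1 = i.val then -ω ((j.val - 1) / 2)
      else 0)
    (D : Matrix (Fin 1) (Fin (2*k+1)) ℝ)
    (hD : ∀ (a : Fin 1) (j : Fin (2*k+1)), D a j =
      if j.val = 0 ∨ j.val % 2 = 1 then 1 else 0) :
    ∀ lam : ℂ,
      (Matrix.fromCols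
        ((S.transpose.map (fun x => (x : ℂ))) - lam • 1)
        (D.transpose.map (fun x => (x : ℂ)))).rank = 2*k+1 := by
  intro lam
  set Sc : Matrix (Fin (2*k+1)) (Fin (2*k+1)) ℂ := S.map (fun x => (x : ℂ)) with hSc
  set Dc : Matrix (Fin 1) (Fin (2*k+1)) ℂ := D.map (fun x => (x : ℂ)) with hDc
  set M := Matrix.fromCols ((S.transpose.map (fun x => (x : ℂ))) - lam • 1)
      (D.transpose.map (fun x => (x : ℂ))) with hM
  have hMT : M.transpose = Matrix.fromRows (Sc - lam • 1) Dc := by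
    rw [hM, Matrix.transpose_fromCols, Matrix.transpose_sub, Matrix.transpose_map,
      Matrix.transpose_transpose, Matrix.transpose_smul, Matrix.transpose_one,
      Matrix.transpose_map, Matrix.transpose_transpose]
  have hinj : Function.Injective M.transpose.mulVecLin := by
    rw [injective_iff_map_eq_zero]
    intro v hv
    rw [Matrix.mulVecLin_apply, hMT, Matrix.fromRows_mulVec] at hv
    have h1 : (Sc - lam • 1).mulVec v = 0 := by
      funext i; exact congrFun hv (Sum.inl i)
    have h2 : Dc.mulVec v = 0 := by
      funext i; exact congrFun hv (Sum.inr i)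
    have hEig : ∀ i : Fin (2*k+1), ∑ j, Sc i j * v j = lam * v i := by
      intro i
      rw [Matrix.sub_mulVec, Matrix.smul_mulVec, Matrix.one_mulVec, sub_eq_zero] at h1
      have := congrFun h1 i
      simpa [Matrix.mulVec, dotProduct] using this
    -- V extended
    set V : ℕ → ℂ := fun m => if h : m < 2*k+1 then v ⟨m, h⟩ else 0 with hV
    have hVnat : ∀ (m : ℕ) (h : m < 2*k+1), V m = v ⟨m, h⟩ := fun m h => dif_pos h
    have hVv : ∀ (i : Fin (2*k+1)), V i.val = v i := by
      intro i; rw [hVnat i.val i.isLt]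
    -- row 0
    have L0 : lam * V 0 = 0 := by
      have h := hEig ⟨0, by omega⟩
      rw [Finset.sum_eq_zero] at h
      · rw [hVnat 0 (by omega)]
        exact h.symm
      · intro j _
        rw [hSc]; simp only [Matrix.map_apply, hS]
        norm_num
    -- odd rows
    have L1 : ∀ j, j < k → (ω j : ℂ) * V (2*j+2) = lam * V (2*j+1) := by
      intro j hj
      have hval : S ⟨2*j+1, by omega⟩ ⟨2*j+2, by omega⟩ = ω j := by
        rw [hS]; simp only [Fin.val_mk, and_true]
        split_ifs with hc1 hc2 <;> first | (congr 1; omega) | (exfalso; omega)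
      have hzrow : ∀ b : Fin (2*k+1), b.val ≠ 2*j+2 → S ⟨2*j+1, by omega⟩ b = 0 := by
        intro b hb'
        rw [hS]; simp only [Fin.val_mk, and_true]
        split_ifs with hc1 hc2 <;> first | rfl | (exfalso; omega)
      have h := hEig ⟨2*j+1, by omega⟩
      rw [Finset.sum_eq_single (⟨2*j+2, by omega⟩ : Fin (2*k+1))] at h
      · rw [hSc, Matrix.map_apply, hval] at h
        rw [hVnat (2*j+2) (by omega), hVnat (2*j+1) (by omega)]
        exact h
      · intro b _ hb
        have hb' : b.val ≠ 2*j+2 := by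
          intro hc; exact hb (Fin.ext (by simpa using hc))
        rw [hSc, Matrix.map_apply, hzrow b hb']
        simp
      · intro hc; exact absurd (Finset.mem_univ _) hc
    -- even rows
    have L2 : ∀ j, j < k → -(ω j : ℂ) * V (2*j+1) = lam * V (2*j+2) := by
      intro j hj
      have hval : S ⟨2*j+2, by omega⟩ ⟨2*j+1, by omega⟩ = -ω j := by
        rw [hS]; simp only [Fin.val_mk, and_true]
        split_ifs with hc1 hc2 <;> first | (congr 2; omega) | (exfalso; omega)
      have hzrow : ∀ b : Fin (2*k+1), b.val ≠ 2*j+1 → S ⟨2*j+2, by omega⟩ b = 0 := by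
        intro b hb'
        rw [hS]; simp only [Fin.val_mk, and_true]
        split_ifs with hc1 hc2 <;> first | rfl | (exfalso; omega)
      have h := hEig ⟨2*j+2, by omega⟩
      rw [Finset.sum_eq_single (⟨2*j+1, by omega⟩ : Fin (2*k+1))] at h
      · rw [hSc, Matrix.map_apply, hval] at h
        rw [hVnat (2*j+1) (by omega), hVnat (2*j+2) (by omega)]
        push_cast at h ⊢
        exact h
      · intro b _ hb
        have hb' : b.val ≠ 2*j+1 := by
          intro hc; exact hb (Fin.ext (by simpa using hc))
        rw [hSc, Matrix.map_apply, hzrow b hb']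
        simp
      · intro hc; exact absurd (Finset.mem_univ _) hc
    -- D row
    have LD : V 0 + ∑ j ∈ Finset.range k, V (2*j+1) = 0 := by
      have h := congrFun h2 0
      simp only [Matrix.mulVec, dotProduct, Pi.zero_apply] at h
      have hsum : ∑ j : Fin (2*k+1), Dc 0 j * v j
          = ∑ m ∈ Finset.range (2*k+1), (if m = 0 ∨ m % 2 = 1 then V m else 0) := by
        rw [← Fin.sum_univ_eq_sum_range (fun m => if m = 0 ∨ m % 2 = 1 then V m else 0) (2*k+1)]
        apply Finset.sum_congr rfl
        intro j _
        rw [hDc, Matrix.map_apply, hD, hVv]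
        by_cases hc : j.val = 0 ∨ j.val % 2 = 1
        · rw [if_pos hc, if_pos hc]; simp
        · rw [if_neg hc, if_neg hc]; simp
      rw [hsum] at h
      rw [Finset.sum_range_succ'] at h
      rw [sum_even_pick k (fun m => if m + 1 = 0 ∨ (m+1) % 2 = 1 then V (m+1) else 0)
        (fun m hm => by rw [if_neg (by omega)])] at h
      simp only [] at h
      rw [if_pos (Or.inl trivial)] at h
      have hcg : ∑ j ∈ Finset.range k,
          (if 2*j+1 = 0 ∨ (2*j+1) % 2 = 1 then V (2*j+1) else 0)
          = ∑ j ∈ Finset.range k, V (2*j+1) :=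
        Finset.sum_congr rfl (fun j _ => by rw [if_pos (by omega)])
      rw [hcg] at h
      rw [add_comm]
      exact h
    -- now the algebra
    have key : ∀ m, m < 2*k+1 → V m = 0 := by
      by_cases hlam : lam = 0
      · subst hlam
        have ho1 : ∀ j, j < k → V (2*j+1) = 0 := by
          intro j hj
          have h := L2 j hj
          simp only [zero_mul] at h
          rcases mul_eq_zero.mp h with h' | h'
          · exact absurd h' (by simpa using (hpos j hj).ne')
          · exact h'
        have ho2 : ∀ j, j < k → V (2*j+2) = 0 := by
          intro j hj
          have h := L1 j hj
          simp only [zero_mul] at h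
          rcases mul_eq_zero.mp h with h' | h'
          · exact absurd h' (by exact_mod_cast (hpos j hj).ne')
          · exact h'
        intro m hm
        rcases Nat.lt_or_ge m 1 with h0 | h0
        · have hm0 : m = 0 := by omega
          subst hm0
          have h := LD
          rw [Finset.sum_eq_zero (fun j hj => ho1 j (Finset.mem_range.mp hj))] at h
          simpa using h
        · rcases Nat.even_or_odd m with he | ho
          · obtain ⟨j, hj⟩ : ∃ j, m = 2*j+2 := by
              rcases he with ⟨t, ht⟩; exact ⟨t-1, by omega⟩
            subst hj; exact ho2 _ (by omega)
          · obtain ⟨j, hj⟩ : ∃ j, m = 2*j+1 := by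
              rcases ho with ⟨t, ht⟩; exact ⟨t, by omega⟩
            subst hj; exact ho1 _ (by omega)
      · -- lam ≠ 0
        have hV0 : V 0 = 0 := by
          rcases mul_eq_zero.mp L0 with h | h
          · exact absurd h hlam
          · exact h
        have hquad : ∀ j, j < k → (lam^2 + (ω j : ℂ)^2) * V (2*j+1) = 0 ∧
            (lam^2 + (ω j : ℂ)^2) * V (2*j+2) = 0 := by
          intro j hj
          have h1 := L1 j hj
          have h2 := L2 j hj
          constructor
          · linear_combination lam * h1.symm - (ω j : ℂ) * h2
          · linear_combination lam * h2.symm + (ω j : ℂ) * h1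
        by_cases hex : ∃ j₀, j₀ < k ∧ lam^2 + (ω j₀ : ℂ)^2 = 0
        · obtain ⟨j₀, hj₀, hq0⟩ := hex
          have hother : ∀ j, j < k → j ≠ j₀ → lam^2 + (ω j : ℂ)^2 ≠ 0 := by
            intro j hj hne hq
            have hc : (ω j : ℂ)^2 = (ω j₀ : ℂ)^2 := by linear_combination hq - hq0
            have hr : (ω j)^2 = (ω j₀)^2 := by exact_mod_cast hc
            have heq : ω j = ω j₀ := by
              nlinarith [hpos j hj, hpos j₀ hj₀]
            exact hdist j j₀ hj hj₀ hne heq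
          have hzero : ∀ j, j < k → j ≠ j₀ → V (2*j+1) = 0 ∧ V (2*j+2) = 0 := by
            intro j hj hne
            obtain ⟨ha, hb⟩ := hquad j hj
            refine ⟨?_, ?_⟩
            · rcases mul_eq_zero.mp ha with h|h
              · exact absurd h (hother j hj hne)
              · exact h
            · rcases mul_eq_zero.mp hb with h|h
              · exact absurd h (hother j hj hne)
              · exact h
          have hsum0 : V (2*j₀+1) = 0 := by
            have h := LD
            rw [hV0, zero_add, Finset.sum_eq_single j₀
              (fun b hb hbne => (hzero b (Finset.mem_range.mp hb) hbne).1)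
              (fun hc => absurd (Finset.mem_range.mpr hj₀) hc)] at h
            exact h
          have hsum2 : V (2*j₀+2) = 0 := by
            have h := L2 j₀ hj₀
            rw [hsum0, mul_zero] at h
            rcases mul_eq_zero.mp h.symm with h' | h'
            · exact absurd h' hlam
            · exact h'
          intro m hm
          rcases Nat.lt_or_ge m 1 with h0 | h0
          · have hm0 : m = 0 := by omega
            subst hm0; exact hV0
          · rcases Nat.even_or_odd m with he | ho
            · obtain ⟨j, hj⟩ : ∃ j, m = 2*j+2 := by
                rcases he with ⟨t, ht⟩; exact ⟨t-1, by omega⟩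
              subst hj
              by_cases hjj : j = j₀
              · subst hjj; exact hsum2
              · exact (hzero j (by omega) hjj).2
            · obtain ⟨j, hj⟩ : ∃ j, m = 2*j+1 := by
                rcases ho with ⟨t, ht⟩; exact ⟨t, by omega⟩
              subst hj
              by_cases hjj : j = j₀
              · subst hjj; exact hsum0
              · exact (hzero j (by omega) hjj).1
        · push_neg at hex
          have hzero : ∀ j, j < k → V (2*j+1) = 0 ∧ V (2*j+2) = 0 := by
            intro j hj
            obtain ⟨ha, hb⟩ := hquad j hj
            refine ⟨?_, ?_⟩
            · rcases mul_eq_zero.mp ha with h|h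
              · exact absurd h (hex j hj)
              · exact h
            · rcases mul_eq_zero.mp hb with h|h
              · exact absurd h (hex j hj)
              · exact h
          intro m hm
          rcases Nat.lt_or_ge m 1 with h0 | h0
          · have hm0 : m = 0 := by omega
            subst hm0; exact hV0
          · rcases Nat.even_or_odd m with he | ho
            · obtain ⟨j, hj⟩ : ∃ j, m = 2*j+2 := by
                rcases he with ⟨t, ht⟩; exact ⟨t-1, by omega⟩
              subst hj; exact (hzero j (by omega)).2
            · obtain ⟨j, hj⟩ : ∃ j, m = 2*j+1 := by
                rcases ho with ⟨t, ht⟩; exact ⟨t, by omega⟩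
              subst hj; exact (hzero j (by omega)).1
    funext i
    have h := key i.val i.isLt
    rw [hVv] at h
    simpa using h
  rw [← Matrix.rank_transpose M, Matrix.rank, LinearMap.finrank_range_of_inj hinj,
    Module.finrank_pi, Fintype.card_fin]
end
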